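/- Let λ > 0, μ ∈ [0,λ), γ ∈ ℝ, and let ω : [0,∞) → ℝ be continuous with lim_{t→∞} |ω(t)|/t = 0. Let D : [0,∞) → ℝ be differentiable with D'(t) = e^{-γω(t)+λt} F̂(e^{γω(t)-λt} D(t)) where F̂ : ℝ → ℝ is continuous and satisfies |F̂(x)| ≤ μ|x| for all x. Then |D(t)| ≤ e^{μt} |D(0)| for all t ≥ 0, and consequently u(t) := e^{γω(t)-λt} D(t) satisfies e^{δt}|u(t)| → 0 as t → ∞ for every 0 ≤ δ < λ - μ. -/

import Mathlib

open Filter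

/-- Global stability for scalar linear noise via the Doss–Sussmann transform:
|D(t)| ≤ e^{μt}|D(0)| and e^{δt}|u(t)| → 0 for 0 ≤ δ < λ - μ, where
u(t) = e^{γω(t) - λt} D(t). -/
theorem stmt10 (lam μ γ : ℝ) (hlam : 0 < lam) (hμ0 : 0 ≤ μ) (hμ : μ < lam)
    (ω : ℝ → ℝ) (hω : Continuous ω)
    (hωgrow : Tendsto (fun t : ℝ => |ω t| / t) atTop (nhds 0))
    (Fh : ℝ → ℝ) (hFh : Continuous Fh) (hFhb : ∀ x : ℝ, |Fh x| ≤ μ * |x|)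
    (D : ℝ → ℝ)
    (hD : ∀ t : ℝ, 0 ≤ t → HasDerivAt D
      (Real.exp (-γ * ω t + lam * t) * Fh (Real.exp (γ * ω t - lam * t) * D t)) t) :
    (∀ t : ℝ, 0 ≤ t → |D t| ≤ Real.exp (μ * t) * |D 0|) ∧
      ∀ δ : ℝ, 0 ≤ δ → δ < lam - μ →
        Tendsto (fun t : ℝ => Real.exp (δ * t) * |Real.exp (γ * ω t - lam * t) * D t|)
          atTop (nhds 0) := by
  have key : ∀ t : ℝ, 0 ≤ t → |D t| ≤ Real.exp (μ * t) * |D 0| := by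
    intro b hb
    have hcont : ContinuousOn D (Set.Icc 0 b) := fun x hx =>
      ((hD x hx.1).continuousAt).continuousWithinAt
    have hderiv : ∀ x ∈ Set.Ico 0 b, HasDerivWithinAt D
        (Real.exp (-γ * ω x + lam * x) * Fh (Real.exp (γ * ω x - lam * x) * D x)) (Set.Ici x) x :=
      fun x hx => (hD x hx.1).hasDerivWithinAt
    have hbound : ∀ x ∈ Set.Ico 0 b,
        ‖Real.exp (-γ * ω x + lam * x) * Fh (Real.exp (γ * ω x - lam * x) * D x)‖ ≤
          μ * ‖D x‖ + 0 := by
      intro x _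
      rw [add_zero]
      have h1 : |Fh (Real.exp (γ * ω x - lam * x) * D x)| ≤
          μ * (Real.exp (γ * ω x - lam * x) * |D x|) := by
        calc |Fh (Real.exp (γ * ω x - lam * x) * D x)|
            ≤ μ * |Real.exp (γ * ω x - lam * x) * D x| := hFhb _
          _ = μ * (Real.exp (γ * ω x - lam * x) * |D x|) := by
              rw [abs_mul, abs_of_pos (Real.exp_pos _)]
      have h2 : Real.exp (-γ * ω x + lam * x) * Real.exp (γ * ω x - lam * x) = 1 := by
        rw [← Real.exp_add]; ring_nf; exact Real.exp_zero
      calc ‖Real.exp (-γ * ω x + lam * x) * Fh (Real.exp (γ * ω x - lam * x) * D x)‖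
          = Real.exp (-γ * ω x + lam * x) * |Fh (Real.exp (γ * ω x - lam * x) * D x)| := by
            rw [Real.norm_eq_abs, abs_mul, abs_of_pos (Real.exp_pos _)]
        _ ≤ Real.exp (-γ * ω x + lam * x) *
              (μ * (Real.exp (γ * ω x - lam * x) * |D x|)) :=
            mul_le_mul_of_nonneg_left h1 (Real.exp_pos _).le
        _ = (Real.exp (-γ * ω x + lam * x) * Real.exp (γ * ω x - lam * x)) * (μ * |D x|) := by
            ring
        _ = μ * ‖D x‖ := by rw [h2, one_mul, Real.norm_eq_abs]
    have := norm_le_gronwallBound_of_norm_deriv_right_le hcont hderiv le_rfl hbound b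
      ⟨hb, le_rfl⟩
    rw [gronwallBound_ε0, sub_zero, Real.norm_eq_abs, Real.norm_eq_abs] at this
    linarith
  refine ⟨key, ?_⟩
  intro δ hδ0 hδ
  have hγω : Tendsto (fun t : ℝ => γ * ω t / t) atTop (nhds 0) := by
    have h1 : Tendsto (fun t : ℝ => |γ| * (|ω t| / t)) atTop (nhds 0) := by
      simpa using hωgrow.const_mul |γ|
    apply squeeze_zero_norm' _ h1
    filter_upwards [eventually_gt_atTop (0:ℝ)] with t ht
    rw [Real.norm_eq_abs, abs_div, abs_mul, abs_of_pos ht, mul_div_assoc]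
  -- exponent tends to -∞
  have hC : δ + μ - lam < 0 := by linarith
  have hexp : Tendsto (fun t : ℝ => γ * ω t + (δ + μ - lam) * t) atTop atBot := by
    have hfac : Tendsto (fun t : ℝ => γ * ω t / t + (δ + μ - lam)) atTop
        (nhds (0 + (δ + μ - lam))) := hγω.add_const _
    rw [zero_add] at hfac
    have := (tendsto_id : Tendsto (fun t : ℝ => t) atTop atTop).atTop_mul_neg hC hfac
    apply this.congr'
    filter_upwards [eventually_gt_atTop (0:ℝ)] with t ht
    field_simp
    rfl
  have hg : Tendsto (fun t : ℝ => |D 0| * Real.exp (γ * ω t + (δ + μ - lam) * t)) atTop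
      (nhds 0) := by
    have := (Real.tendsto_exp_atBot.comp hexp).const_mul |D 0|
    simpa using this
  apply squeeze_zero_norm' _ hg
  filter_upwards [eventually_ge_atTop (0:ℝ)] with t ht
  have hpos : (0:ℝ) ≤ Real.exp (δ * t) * |Real.exp (γ * ω t - lam * t) * D t| :=
    mul_nonneg (Real.exp_pos _).le (abs_nonneg _)
  rw [Real.norm_eq_abs, abs_of_nonneg hpos, abs_mul, abs_of_pos (Real.exp_pos _)]
  calc Real.exp (δ * t) * (Real.exp (γ * ω t - lam * t) * |D t|)
      ≤ Real.exp (δ * t) * (Real.exp (γ * ω t - lam * t) * (Real.exp (μ * t) * |D 0|)) := by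
        apply mul_le_mul_of_nonneg_left _ (Real.exp_pos _).le
        exact mul_le_mul_of_nonneg_left (key t ht) (Real.exp_pos _).le
    _ = |D 0| * Real.exp (γ * ω t + (δ + μ - lam) * t) := by
        have h3 : Real.exp (δ * t) * Real.exp (γ * ω t - lam * t) * Real.exp (μ * t) =
            Real.exp (γ * ω t + (δ + μ - lam) * t) := by
          rw [← Real.exp_add, ← Real.exp_add]; ring_nf
        rw [← h3]; ring
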